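/- (Stability correction for simultaneous coverage) Suppose for each fixed model M and level α the event E_M(α) (miscoverage using constant K_{M,α}) satisfies P(y ∈ E_M(α)) ≤ α for y ~ P. Let M̂ be an (η,τ,ν)-stable selection with ν < 1 and fix δ ∈ (0,1). Then P(y ∈ E_{M̂(y)}(δ(1−ν)e^{−η})) ≤ δ + τ + ν. -/

import Mathlib

open MeasureTheory ProbabilityTheory
open scoped ENNReal

/-- Two distributions are `(η,τ)`-indistinguishable. -/
def Indist {α : Type*} [MeasurableSpace α] (η τ : ℝ) (μ ν : Measure α) : Prop :=
  ∀ O : Set α, MeasurableSet O →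
    μ O ≤ ENNReal.ofReal (Real.exp η) * ν O + ENNReal.ofReal τ ∧
    ν O ≤ ENNReal.ofReal (Real.exp η) * μ O + ENNReal.ofReal τ

variable {d : ℕ}

instance : MeasurableSpace (Finset (Fin d)) := ⊤

instance : MeasurableSingletonClass (Finset (Fin d)) :=
  ⟨fun _ => MeasurableSpace.measurableSet_top⟩

lemma measure_coe_finset {α : Type*} [MeasurableSpace α] [MeasurableSingletonClass α]
    (μ : Measure α) (s : Finset α) : μ ↑s = ∑ x ∈ s, μ {x} := by
  have h : (↑s : Set α) = ⋃ x ∈ s, ({x} : Set α) := by ext x; simp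
  rw [h, measure_biUnion_finset ?_ fun x _ => measurableSet_singleton x]
  intro x _ y _ hxy
  simp [Set.disjoint_singleton, hxy]

/-- Stability correction for simultaneous coverage: if for each fixed model `M`
and level `α ∈ (0,1)` the miscoverage event `E M α` has probability at most `α`,
and the (randomized) selection `M̂` is `(η,τ,ν)`-stable, then the miscoverage
probability of the data-dependent event at level `δ(1-ν)e^{-η}` is at most
`δ + τ + ν`. -/
theorem stability_correction {n : ℕ}
    (P : Measure (Fin n → ℝ)) [IsProbabilityMeasure P]
    (E : Finset (Fin d) → ℝ → Set (Fin n → ℝ))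
    (hEmeas : ∀ M α, MeasurableSet (E M α))
    (hE : ∀ M : Finset (Fin d), ∀ α ∈ Set.Ioo (0 : ℝ) 1, P (E M α) ≤ ENNReal.ofReal α)
    (Mhat : Kernel (Fin n → ℝ) (Finset (Fin d))) [IsMarkovKernel Mhat]
    (η τ ν δ : ℝ) (hη : 0 ≤ η) (hτ : 0 ≤ τ) (hν0 : 0 ≤ ν) (hν1 : ν < 1)
    (hδ : δ ∈ Set.Ioo (0 : ℝ) 1)
    (hstable : ENNReal.ofReal (1 - ν) ≤
      (P.prod P) {p | Indist η τ (Mhat p.1) (Mhat p.2)}) :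
    (P ⊗ₘ Mhat) {p | p.1 ∈ E p.2 (δ * (1 - ν) * Real.exp (-η))}
      ≤ ENNReal.ofReal (δ + τ + ν) := by
  classical
  obtain ⟨hδ0, hδ1⟩ := hδ
  set α' : ℝ := δ * (1 - ν) * Real.exp (-η) with hα'def
  have hν1' : (0:ℝ) < 1 - ν := by linarith
  have hexp1 : Real.exp (-η) ≤ 1 := Real.exp_le_one_iff.mpr (by linarith)
  have hα'mem : α' ∈ Set.Ioo (0:ℝ) 1 := by
    constructor
    · positivity
    · show δ * (1 - ν) * Real.exp (-η) < 1
      have hx : δ * (1 - ν) < 1 := by nlinarith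
      have hy : δ * (1 - ν) * Real.exp (-η) ≤ δ * (1 - ν) :=
        mul_le_of_le_one_right (by positivity) hexp1
      linarith
  -- the data-dependent model set
  set A : (Fin n → ℝ) → Set (Finset (Fin d)) := fun y => {M | y ∈ E M α'} with hAdef
  have hAmeas : ∀ y, MeasurableSet (A y) := fun _ => MeasurableSpace.measurableSet_top
  -- indicator functions
  set ind : Finset (Fin d) → (Fin n → ℝ) → ℝ≥0∞ :=
    fun M => (E M α').indicator (fun _ => (1:ℝ≥0∞)) with hinddef
  have hindmeas : ∀ M, Measurable (ind M) := fun M =>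
    measurable_const.indicator (hEmeas M α')
  -- decomposition of the measure of A y
  have hdecomp : ∀ (μ : Measure (Finset (Fin d))) (y : Fin n → ℝ),
      μ (A y) = ∑ M : Finset (Fin d), μ {M} * ind M y := by
    intro μ y
    have h1 : A y = ↑(Finset.univ.filter fun M => y ∈ E M α') := by
      ext M; simp [hAdef]
    rw [h1, measure_coe_finset, Finset.sum_filter]
    refine Finset.sum_congr rfl fun M _ => ?_
    by_cases h : y ∈ E M α' <;> simp [hinddef, Set.indicator, h]
  -- measurability helpers
  have hφmeas : Measurable fun y => Mhat y (A y) := by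
    have : (fun y => Mhat y (A y)) = fun y => ∑ M : Finset (Fin d), Mhat y {M} * ind M y := by
      funext y; exact hdecomp (Mhat y) y
    rw [this]
    exact Finset.measurable_sum _ fun M _ =>
      (Mhat.measurable_coe (measurableSet_singleton M)).mul (hindmeas M)
  have hχmeas : Measurable fun p : (Fin n → ℝ) × (Fin n → ℝ) => Mhat p.2 (A p.1) := by
    have : (fun p : (Fin n → ℝ) × (Fin n → ℝ) => Mhat p.2 (A p.1))
        = fun p => ∑ M : Finset (Fin d), Mhat p.2 {M} * ind M p.1 := by
      funext p; exact hdecomp (Mhat p.2) p.1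
    rw [this]
    exact Finset.measurable_sum _ fun M _ =>
      ((Mhat.measurable_coe (measurableSet_singleton M)).comp measurable_snd).mul
        ((hindmeas M).comp measurable_fst)
  -- Step 1: rewrite the compProd measure
  have hS : MeasurableSet {p : (Fin n → ℝ) × Finset (Fin d) | p.1 ∈ E p.2 α'} := by
    have : {p : (Fin n → ℝ) × Finset (Fin d) | p.1 ∈ E p.2 α'}
        = ⋃ M : Finset (Fin d), (E M α') ×ˢ ({M} : Set (Finset (Fin d))) := by
      ext p
      simp only [Set.mem_setOf_eq, Set.mem_iUnion, Set.mem_prod, Set.mem_singleton_iff]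
      constructor
      · intro h; exact ⟨p.2, h, rfl⟩
      · rintro ⟨M, h, rfl⟩; exact h
    rw [this]
    exact MeasurableSet.iUnion fun M =>
      (hEmeas M α').prod (MeasurableSpace.measurableSet_top)
  have h1 : (P ⊗ₘ Mhat) {p | p.1 ∈ E p.2 α'} = ∫⁻ y, Mhat y (A y) ∂P := by
    rw [Measure.compProd_apply hS]; rfl
  rw [show {p : (Fin n → ℝ) × Finset (Fin d) | p.1 ∈ E p.2 (δ * (1 - ν) * Real.exp (-η))}
      = {p : (Fin n → ℝ) × Finset (Fin d) | p.1 ∈ E p.2 α'} from rfl, h1]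
  -- move to the product space
  have h2 : ∫⁻ p, Mhat p.1 (A p.1) ∂(P.prod P) = ∫⁻ y, Mhat y (A y) ∂P := by
    calc ∫⁻ p, Mhat p.1 (A p.1) ∂(P.prod P)
        = ∫⁻ p, Mhat p.1 (A p.1) * (fun _ : Fin n → ℝ => (1:ℝ≥0∞)) p.2 ∂(P.prod P) := by
          simp
      _ = (∫⁻ y, Mhat y (A y) ∂P) * ∫⁻ _y, (1:ℝ≥0∞) ∂P :=
          lintegral_prod_mul hφmeas.aemeasurable aemeasurable_const
      _ = ∫⁻ y, Mhat y (A y) ∂P := by simp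
  rw [← h2]
  -- the bad set
  set B : Set ((Fin n → ℝ) × (Fin n → ℝ)) :=
    {p | ¬ Mhat p.1 (A p.1) ≤
      ENNReal.ofReal (Real.exp η) * Mhat p.2 (A p.1) + ENNReal.ofReal τ} with hBdef
  have hBmeas : MeasurableSet B := by
    have : MeasurableSet {p : (Fin n → ℝ) × (Fin n → ℝ) | Mhat p.1 (A p.1) ≤
        ENNReal.ofReal (Real.exp η) * Mhat p.2 (A p.1) + ENNReal.ofReal τ} :=
      measurableSet_le (hφmeas.comp measurable_fst)
        ((hχmeas.const_mul _).add_const _)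
    exact this.compl
  have hGsub : {p : (Fin n → ℝ) × (Fin n → ℝ) | Indist η τ (Mhat p.1) (Mhat p.2)} ⊆ Bᶜ := by
    intro p hp
    simp only [hBdef, Set.mem_compl_iff, Set.mem_setOf_eq, not_not]
    exact (hp (A p.1) (hAmeas p.1)).1
  have hBle : (P.prod P) B ≤ ENNReal.ofReal ν := by
    have hc : ENNReal.ofReal (1 - ν) ≤ (P.prod P) Bᶜ :=
      le_trans hstable (measure_mono hGsub)
    have hB : (P.prod P) B = 1 - (P.prod P) Bᶜ := by
      have h := measure_compl hBmeas.compl (measure_ne_top (P.prod P) Bᶜ)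
      rw [compl_compl, measure_univ] at h
      exact h
    rw [hB]
    calc (1:ℝ≥0∞) - (P.prod P) Bᶜ ≤ 1 - ENNReal.ofReal (1 - ν) := tsub_le_tsub_left hc _
      _ = ENNReal.ofReal 1 - ENNReal.ofReal (1 - ν) := by rw [ENNReal.ofReal_one]
      _ = ENNReal.ofReal (1 - (1 - ν)) := (ENNReal.ofReal_sub _ (by linarith)).symm
      _ = ENNReal.ofReal ν := by ring_nf
  -- pointwise bound
  have hpt : ∀ p : (Fin n → ℝ) × (Fin n → ℝ), Mhat p.1 (A p.1)
      ≤ (ENNReal.ofReal (Real.exp η) * Mhat p.2 (A p.1) + ENNReal.ofReal τ)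
        + B.indicator (fun _ => (1:ℝ≥0∞)) p := by
    intro p
    by_cases hp : p ∈ B
    · calc Mhat p.1 (A p.1) ≤ 1 := prob_le_one
        _ = B.indicator (fun _ => (1:ℝ≥0∞)) p := by simp [hp]
        _ ≤ _ := le_add_self
    · have : Mhat p.1 (A p.1) ≤
          ENNReal.ofReal (Real.exp η) * Mhat p.2 (A p.1) + ENNReal.ofReal τ := by
        by_contra h; exact hp h
      exact le_trans this le_self_add
  -- integrate
  have hint : ∫⁻ p, Mhat p.1 (A p.1) ∂(P.prod P)
      ≤ ENNReal.ofReal (Real.exp η) * (∫⁻ p, Mhat p.2 (A p.1) ∂(P.prod P))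
        + ENNReal.ofReal τ + ENNReal.ofReal ν := by
    calc ∫⁻ p, Mhat p.1 (A p.1) ∂(P.prod P)
        ≤ ∫⁻ p, (ENNReal.ofReal (Real.exp η) * Mhat p.2 (A p.1) + ENNReal.ofReal τ)
            + B.indicator (fun _ => (1:ℝ≥0∞)) p ∂(P.prod P) := lintegral_mono hpt
      _ = (∫⁻ p, ENNReal.ofReal (Real.exp η) * Mhat p.2 (A p.1) + ENNReal.ofReal τ ∂(P.prod P))
            + ∫⁻ p, B.indicator (fun _ => (1:ℝ≥0∞)) p ∂(P.prod P) := by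
          rw [lintegral_add_right _ (measurable_const.indicator hBmeas)]
      _ = (ENNReal.ofReal (Real.exp η) * (∫⁻ p, Mhat p.2 (A p.1) ∂(P.prod P))
            + ENNReal.ofReal τ) + (P.prod P) B := by
          rw [lintegral_add_right _ measurable_const, lintegral_const_mul _ hχmeas,
            lintegral_const, measure_univ, mul_one, lintegral_indicator hBmeas _]
          simp
      _ ≤ _ := by exact add_le_add_right hBle _
  -- compute the decoupled integral
  have hdec : ∫⁻ p, Mhat p.2 (A p.1) ∂(P.prod P) ≤ ENNReal.ofReal α' := by
    have heq : ∫⁻ p, Mhat p.2 (A p.1) ∂(P.prod P)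
        = ∑ M : Finset (Fin d), (∫⁻ y, ind M y ∂P) * ∫⁻ y, Mhat y {M} ∂P := by
      calc ∫⁻ p, Mhat p.2 (A p.1) ∂(P.prod P)
          = ∫⁻ p, ∑ M : Finset (Fin d), ind M p.1 * Mhat p.2 {M} ∂(P.prod P) := by
            congr 1; funext p; rw [hdecomp (Mhat p.2) p.1]
            exact Finset.sum_congr rfl fun M _ => mul_comm _ _
        _ = ∑ M : Finset (Fin d), ∫⁻ p, ind M p.1 * Mhat p.2 {M} ∂(P.prod P) := by
            rw [lintegral_finset_sum]
            intro M _
            exact ((hindmeas M).comp measurable_fst).mul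
              ((Mhat.measurable_coe (measurableSet_singleton M)).comp measurable_snd)
        _ = ∑ M : Finset (Fin d), (∫⁻ y, ind M y ∂P) * ∫⁻ y, Mhat y {M} ∂P := by
            refine Finset.sum_congr rfl fun M _ => ?_
            exact lintegral_prod_mul (hindmeas M).aemeasurable
              (Mhat.measurable_coe (measurableSet_singleton M)).aemeasurable
    rw [heq]
    have hsum1 : ∑ M : Finset (Fin d), ∫⁻ y, Mhat y {M} ∂P = 1 := by
      rw [← lintegral_finset_sum]
      · have : ∀ y : Fin n → ℝ, ∑ M : Finset (Fin d), Mhat y {M} = 1 := by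
          intro y
          rw [← measure_coe_finset (Mhat y) Finset.univ, Finset.coe_univ, measure_univ]
        simp_rw [this]
        simp
      · exact fun M _ => Mhat.measurable_coe (measurableSet_singleton M)
    calc ∑ M : Finset (Fin d), (∫⁻ y, ind M y ∂P) * ∫⁻ y, Mhat y {M} ∂P
        ≤ ∑ M : Finset (Fin d), ENNReal.ofReal α' * ∫⁻ y, Mhat y {M} ∂P := by
          refine Finset.sum_le_sum fun M _ => ?_
          refine mul_le_mul_left ?_ _
          rw [hinddef]
          rw [lintegral_indicator (hEmeas M α') _]
          simpa using hE M α' hα'mem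
      _ = ENNReal.ofReal α' * ∑ M : Finset (Fin d), ∫⁻ y, Mhat y {M} ∂P := by
          rw [Finset.mul_sum]
      _ = ENNReal.ofReal α' := by rw [hsum1, mul_one]
  -- put it together
  refine le_trans hint ?_
  have hmul : ENNReal.ofReal (Real.exp η) * ENNReal.ofReal α' = ENNReal.ofReal (δ * (1 - ν)) := by
    rw [← ENNReal.ofReal_mul (Real.exp_pos η).le]
    congr 1
    rw [hα'def, Real.exp_neg]
    field_simp
  calc ENNReal.ofReal (Real.exp η) * (∫⁻ p, Mhat p.2 (A p.1) ∂(P.prod P))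
        + ENNReal.ofReal τ + ENNReal.ofReal ν
      ≤ ENNReal.ofReal (Real.exp η) * ENNReal.ofReal α' + ENNReal.ofReal τ + ENNReal.ofReal ν := by
        gcongr
    _ = ENNReal.ofReal (δ * (1 - ν)) + ENNReal.ofReal τ + ENNReal.ofReal ν := by rw [hmul]
    _ ≤ ENNReal.ofReal δ + ENNReal.ofReal τ + ENNReal.ofReal ν := by
        have hd : (δ * (1 - ν) : ℝ) ≤ δ := by nlinarith
        gcongr ?_ + _ + _
        exact ENNReal.ofReal_le_ofReal hd
    _ = ENNReal.ofReal (δ + τ + ν) := by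
        rw [← ENNReal.ofReal_add hδ0.le hτ, ← ENNReal.ofReal_add (by linarith) hν0]
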